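/- Let (A,C)_ψ be an entwining structure with a normalised integral map φ, let M, N be entwined modules and g : M → N a right A-module map. Then g̃(m) := g(m₍₀₎)₍₀₎ · m₍₁₎⁽²⁾ ⟨g(m₍₀₎)₍₁₎, m₍₁₎⁽¹⁾⟩ (where φ(c) = c⁽¹⁾⊗c⁽²⁾) defines a map that is both right A-linear and right C-colinear, i.e., a morphism of entwined modules. Moreover, if g is already a morphism of entwined modules, then g̃ = g. -/
import Mathlib


open TensorProduct LinearMap

noncomputable section

variable (k A C : Type*) [CommRing k] [Ring A] [Algebra k A]
  [AddCommGroup C] [Module k C] [Coalgebra k C]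

/-- An entwining structure `(A,C)_ψ` over `k`. -/
structure Entwining where
  psi : C ⊗[k] A →ₗ[k] A ⊗[k] C
  mul_compat :
    psi ∘ₗ lTensor C (LinearMap.mul' k A)
      = rTensor C (LinearMap.mul' k A)
        ∘ₗ (TensorProduct.assoc k A A C).symm.toLinearMap
        ∘ₗ lTensor A psi
        ∘ₗ (TensorProduct.assoc k A C A).toLinearMap
        ∘ₗ rTensor A psi
        ∘ₗ (TensorProduct.assoc k C A A).symm.toLinearMap
  one_compat : ∀ c : C, psi (c ⊗ₜ[k] (1 : A)) = (1 : A) ⊗ₜ[k] c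
  comul_compat :
    lTensor A (Coalgebra.comul (R := k) (A := C)) ∘ₗ psi
      = (TensorProduct.assoc k A C C).toLinearMap
        ∘ₗ rTensor C psi
        ∘ₗ (TensorProduct.assoc k C A C).symm.toLinearMap
        ∘ₗ lTensor C psi
        ∘ₗ (TensorProduct.assoc k C C A).toLinearMap
        ∘ₗ rTensor A (Coalgebra.comul (R := k) (A := C))
  counit_compat : ∀ (c : C) (a : A),
    (TensorProduct.rid k A)
        ((lTensor A (Coalgebra.counit (R := k) (A := C))) (psi (c ⊗ₜ[k] a)))
      = Coalgebra.counit (R := k) c • a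

variable {k A C} in
/-- `act` is a unital associative right `A`-action on `M`. -/
def IsRAction {M : Type*} [AddCommGroup M] [Module k M]
    (act : M ⊗[k] A →ₗ[k] M) : Prop :=
  (∀ m : M, act (m ⊗ₜ[k] (1 : A)) = m) ∧
  act ∘ₗ lTensor M (LinearMap.mul' k A)
    = act ∘ₗ rTensor A act ∘ₗ (TensorProduct.assoc k M A A).symm.toLinearMap

variable {k A C} in
/-- `coact` is a counital coassociative right `C`-coaction on `M`. -/
def IsRCoaction {M : Type*} [AddCommGroup M] [Module k M]
    (coact : M →ₗ[k] M ⊗[k] C) : Prop :=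
  (∀ m : M, (TensorProduct.rid k M)
      ((lTensor M (Coalgebra.counit (R := k) (A := C))) (coact m)) = m) ∧
  rTensor C coact ∘ₗ coact
    = (TensorProduct.assoc k M C C).symm.toLinearMap
      ∘ₗ lTensor M (Coalgebra.comul (R := k) (A := C)) ∘ₗ coact

variable {k A C} in
/-- The compatibility condition making `(M, act, coact)` an entwined
`(A,C)_ψ`-module: `ρ^M(m·a) = m₍₀₎·a_α ⊗ m₍₁₎^α`. -/
def IsEntwinedModule (E : Entwining k A C) {M : Type*} [AddCommGroup M] [Module k M]
    (act : M ⊗[k] A →ₗ[k] M) (coact : M →ₗ[k] M ⊗[k] C) : Prop :=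
  IsRAction act ∧ IsRCoaction coact ∧
  coact ∘ₗ act
    = rTensor C act
      ∘ₗ (TensorProduct.assoc k M A C).symm.toLinearMap
      ∘ₗ lTensor M E.psi
      ∘ₗ (TensorProduct.assoc k M C A).toLinearMap
      ∘ₗ rTensor A coact

variable {k A C} in
/-- A morphism of entwined modules: right `A`-linear and right `C`-colinear. -/
def IsEntwinedHom {M N : Type*} [AddCommGroup M] [Module k M]
    [AddCommGroup N] [Module k N]
    (actM : M ⊗[k] A →ₗ[k] M) (coactM : M →ₗ[k] M ⊗[k] C)
    (actN : N ⊗[k] A →ₗ[k] N) (coactN : N →ₗ[k] N ⊗[k] C)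
    (f : M →ₗ[k] N) : Prop :=
  (f ∘ₗ actM = actN ∘ₗ rTensor A f) ∧ (coactN ∘ₗ f = rTensor C f ∘ₗ coactM)

variable {k C} in
/-- The evaluation pairing `C ⊗ C* → k`. -/
def pairCD : C ⊗[k] Module.Dual k C →ₗ[k] k :=
  TensorProduct.lift (Module.Dual.eval k C)

variable {k A C} in
/-- `φ : C → C* ⊗ A` is a normalised integral map in `(A,C)_ψ`
(Definition 4.1 of the paper). -/
def IsNormalisedIntegralMap (E : Entwining k A C)
    (φ : C →ₗ[k] Module.Dual k C ⊗[k] A) : Prop :=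
  -- (1) `μ∘(A⊗ev_C⊗A)∘(ψ⊗φ)∘(C⊗ψ) = (ev_C⊗μ)∘(C⊗φ⊗A)`
  ((LinearMap.mul' k A)
    ∘ₗ lTensor A (TensorProduct.lid k A).toLinearMap
    ∘ₗ lTensor A (rTensor A (pairCD (k := k) (C := C)))
    ∘ₗ lTensor A (TensorProduct.assoc k C (Module.Dual k C) A).symm.toLinearMap
    ∘ₗ (TensorProduct.assoc k A C (Module.Dual k C ⊗[k] A)).toLinearMap
    ∘ₗ TensorProduct.map E.psi φ
    ∘ₗ (TensorProduct.assoc k C A C).symm.toLinearMap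
    ∘ₗ lTensor C E.psi
    = (TensorProduct.lid k A).toLinearMap
      ∘ₗ TensorProduct.map (pairCD (k := k) (C := C)) (LinearMap.mul' k A)
      ∘ₗ (TensorProduct.assoc k C (Module.Dual k C) (A ⊗[k] A)).symm.toLinearMap
      ∘ₗ lTensor C (TensorProduct.assoc k (Module.Dual k C) A A).toLinearMap
      ∘ₗ lTensor C (rTensor A φ)) ∧
  -- (2) `(ev_C⊗A⊗C)∘(C⊗φ⊗C)∘(C⊗Δ) = ψ∘(C⊗ev_C⊗A)∘(Δ⊗φ)`
  ((TensorProduct.lid k (A ⊗[k] C)).toLinearMap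
    ∘ₗ rTensor (A ⊗[k] C) (pairCD (k := k) (C := C))
    ∘ₗ (TensorProduct.assoc k C (Module.Dual k C) (A ⊗[k] C)).symm.toLinearMap
    ∘ₗ lTensor C (TensorProduct.assoc k (Module.Dual k C) A C).toLinearMap
    ∘ₗ lTensor C (rTensor C φ)
    ∘ₗ lTensor C (Coalgebra.comul (R := k) (A := C))
    = E.psi
      ∘ₗ lTensor C (TensorProduct.lid k A).toLinearMap
      ∘ₗ lTensor C (rTensor A (pairCD (k := k) (C := C)))
      ∘ₗ lTensor C (TensorProduct.assoc k C (Module.Dual k C) A).symm.toLinearMap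
      ∘ₗ (TensorProduct.assoc k C C (Module.Dual k C ⊗[k] A)).toLinearMap
      ∘ₗ TensorProduct.map (Coalgebra.comul (R := k) (A := C)) φ) ∧
  -- (3) `(ev_C⊗A)∘(C⊗φ)∘Δ = 1_A ∘ ε`
  ((TensorProduct.lid k A).toLinearMap
    ∘ₗ rTensor A (pairCD (k := k) (C := C))
    ∘ₗ (TensorProduct.assoc k C (Module.Dual k C) A).symm.toLinearMap
    ∘ₗ lTensor C φ
    ∘ₗ (Coalgebra.comul (R := k) (A := C))
    = (Algebra.linearMap k A) ∘ₗ (Coalgebra.counit (R := k) (A := C)))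

variable {k A C} in
/-- The averaged map `g̃ : M → N`,
`g̃(m) = g(m₍₀₎)₍₀₎ · m₍₁₎⁽²⁾ ⟨g(m₍₀₎)₍₁₎, m₍₁₎⁽¹⁾⟩` (Lemma 4.3). -/
def intAvg (φ : C →ₗ[k] Module.Dual k C ⊗[k] A)
    {M N : Type*} [AddCommGroup M] [Module k M] [AddCommGroup N] [Module k N]
    (actN : N ⊗[k] A →ₗ[k] N) (coactN : N →ₗ[k] N ⊗[k] C)
    (coactM : M →ₗ[k] M ⊗[k] C) (g : M →ₗ[k] N) : M →ₗ[k] N :=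
  actN
  ∘ₗ lTensor N (TensorProduct.lid k A).toLinearMap
  ∘ₗ lTensor N (rTensor A (pairCD (k := k) (C := C)))
  ∘ₗ lTensor N (TensorProduct.assoc k C (Module.Dual k C) A).symm.toLinearMap
  ∘ₗ (TensorProduct.assoc k N C (Module.Dual k C ⊗[k] A)).toLinearMap
  ∘ₗ TensorProduct.map (coactN ∘ₗ g) φ
  ∘ₗ coactM

set_option maxHeartbeats 1600000 in
set_option synthInstance.maxHeartbeats 400000 in
/-- for a normalised integral map `φ` and a right `A`-linear
`g : M → N` between entwined modules, the averaged map `g̃` is a morphism of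
entwined modules; if `g` is already such a morphism, then `g̃ = g`. -/
theorem intAvg_is_entwinedHom (E : Entwining k A C)
    (φ : C →ₗ[k] Module.Dual k C ⊗[k] A) (hφ : IsNormalisedIntegralMap E φ)
    (M N : Type*) [AddCommGroup M] [Module k M] [AddCommGroup N] [Module k N]
    (actM : M ⊗[k] A →ₗ[k] M) (coactM : M →ₗ[k] M ⊗[k] C)
    (actN : N ⊗[k] A →ₗ[k] N) (coactN : N →ₗ[k] N ⊗[k] C)
    (hM : IsEntwinedModule E actM coactM) (hN : IsEntwinedModule E actN coactN)
    (g : M →ₗ[k] N) (hg : g ∘ₗ actM = actN ∘ₗ rTensor A g) :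
    IsEntwinedHom actM coactM actN coactN (intAvg φ actN coactN coactM g) ∧
    (IsEntwinedHom actM coactM actN coactN g →
      intAvg φ actN coactN coactM g = g) := by
  refine ⟨⟨?_, ?_⟩, fun hgE => ?_⟩
  · have hNassoc : ∀ (n : N) (b a : A),
        actN (actN (n ⊗ₜ[k] b) ⊗ₜ[k] a) = actN (n ⊗ₜ[k] (b*a)) := by
      intro n b a
      have h := LinearMap.congr_fun hN.1.2 (n ⊗ₜ[k] (b ⊗ₜ[k] a))
      simp only [LinearMap.coe_comp, Function.comp_apply, lTensor_tmul,
        LinearEquiv.coe_coe, assoc_symm_tmul, rTensor_tmul, LinearMap.mul'_apply] at h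
      exact h.symm
    apply TensorProduct.ext'; intro m a
    simp only [intAvg, LinearMap.coe_comp, Function.comp_apply, rTensor_tmul]
    have hMe := LinearMap.congr_fun hM.2.2 (m ⊗ₜ[k] a)
    simp only [LinearMap.coe_comp, Function.comp_apply, rTensor_tmul,
      LinearEquiv.coe_coe] at hMe
    rw [hMe]
    generalize coactM m = t
    induction t using TensorProduct.induction_on with
    | zero => simp only [map_zero, tmul_zero, zero_tmul]
    | add x y hx hy => simp only [map_add, tmul_add, add_tmul, hx, hy]
    | tmul m' c =>
        simp only [assoc_tmul, lTensor_tmul, map_tmul, LinearMap.coe_comp,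
          Function.comp_apply, LinearEquiv.coe_coe]
        have haveA0 : ∀ s : A ⊗[k] C,
            (TensorProduct.map (coactN ∘ₗ g) φ)
              ((LinearMap.rTensor C actM) ((TensorProduct.assoc k M A C).symm (m' ⊗ₜ[k] s)))
            = (TensorProduct.map
                (LinearMap.rTensor C actN
                  ∘ₗ (TensorProduct.assoc k N A C).symm.toLinearMap
                  ∘ₗ LinearMap.lTensor N E.psi
                  ∘ₗ (TensorProduct.assoc k N C A).toLinearMap) φ)
                ((TensorProduct.assoc k (N ⊗[k] C) A C).symm (coactN (g m') ⊗ₜ[k] s)) := by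
          intro s
          induction s using TensorProduct.induction_on with
          | zero => simp only [map_zero, tmul_zero, zero_tmul]
          | add x y hx hy => simp only [map_add, tmul_add, add_tmul, hx, hy]
          | tmul a' c'' =>
              simp only [assoc_symm_tmul, rTensor_tmul, map_tmul, LinearMap.coe_comp,
                Function.comp_apply, LinearEquiv.coe_coe]
              have h1 := LinearMap.congr_fun hg (m' ⊗ₜ[k] a')
              simp only [LinearMap.coe_comp, Function.comp_apply, rTensor_tmul] at h1
              rw [h1]
              have h2 := LinearMap.congr_fun hN.2.2 (g m' ⊗ₜ[k] a')
              simp only [LinearMap.coe_comp, Function.comp_apply, rTensor_tmul,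
                LinearEquiv.coe_coe] at h2
              rw [h2]
        rw [haveA0 (E.psi (c ⊗ₜ[k] a))]
        have haveA1 : ∀ (y : N ⊗[k] C) (c : C) (a : A),
            actN ((LinearMap.lTensor N (TensorProduct.lid k A).toLinearMap)
              ((LinearMap.lTensor N (LinearMap.rTensor A pairCD))
                ((LinearMap.lTensor N (TensorProduct.assoc k C (Module.Dual k C) A).symm.toLinearMap)
                  ((TensorProduct.assoc k N C (Module.Dual k C ⊗[k] A))
                    ((TensorProduct.map
                        (LinearMap.rTensor C actN
                          ∘ₗ (TensorProduct.assoc k N A C).symm.toLinearMap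
                          ∘ₗ LinearMap.lTensor N E.psi
                          ∘ₗ (TensorProduct.assoc k N C A).toLinearMap) φ)
                      ((TensorProduct.assoc k (N ⊗[k] C) A C).symm (y ⊗ₜ[k] E.psi (c ⊗ₜ[k] a))))))))
            = actN ((LinearMap.lTensor N
                ((LinearMap.mul' k A)
                  ∘ₗ lTensor A (TensorProduct.lid k A).toLinearMap
                  ∘ₗ lTensor A (rTensor A (pairCD (k := k) (C := C)))
                  ∘ₗ lTensor A (TensorProduct.assoc k C (Module.Dual k C) A).symm.toLinearMap
                  ∘ₗ (TensorProduct.assoc k A C (Module.Dual k C ⊗[k] A)).toLinearMap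
                  ∘ₗ TensorProduct.map E.psi φ
                  ∘ₗ (TensorProduct.assoc k C A C).symm.toLinearMap
                  ∘ₗ lTensor C E.psi))
                ((TensorProduct.assoc k N C (C ⊗[k] A)) (y ⊗ₜ[k] (c ⊗ₜ[k] a)))) := by
          intro y c a
          induction y using TensorProduct.induction_on with
          | zero => simp only [map_zero, tmul_zero, zero_tmul]
          | add x y hx hy => simp only [map_add, tmul_add, add_tmul, hx, hy]
          | tmul n c1 =>
              simp only [assoc_tmul, lTensor_tmul, LinearMap.coe_comp, Function.comp_apply,
                LinearEquiv.coe_coe]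
              generalize E.psi (c ⊗ₜ[k] a) = s
              induction s using TensorProduct.induction_on with
              | zero => simp only [map_zero, tmul_zero, zero_tmul]
              | add x y hx hy => simp only [map_add, tmul_add, add_tmul, hx, hy]
              | tmul a1 c2 =>
                  simp only [assoc_symm_tmul, assoc_tmul, lTensor_tmul, rTensor_tmul,
                    map_tmul, LinearMap.coe_comp, Function.comp_apply, LinearEquiv.coe_coe]
                  generalize E.psi (c1 ⊗ₜ[k] a1) = w
                  induction w using TensorProduct.induction_on with
                  | zero => simp only [map_zero, tmul_zero, zero_tmul]
                  | add x y hx hy => simp only [map_add, tmul_add, add_tmul, hx, hy]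
                  | tmul a2 c3 =>
                      simp only [assoc_symm_tmul, assoc_tmul, lTensor_tmul, rTensor_tmul,
                        map_tmul, LinearMap.coe_comp, Function.comp_apply, LinearEquiv.coe_coe]
                      generalize φ c2 = u
                      induction u using TensorProduct.induction_on with
                      | zero => simp only [map_zero, tmul_zero, zero_tmul]
                      | add x y hx hy => simp only [map_add, tmul_add, add_tmul, hx, hy]
                      | tmul f b =>
                          simp only [assoc_symm_tmul, assoc_tmul, lTensor_tmul, rTensor_tmul,
                            map_tmul, lid_tmul, pairCD, lift.tmul, LinearMap.mul'_apply,
                            tmul_smul, map_smul, mul_smul_comm, hNassoc,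
                            LinearMap.coe_comp, Function.comp_apply, LinearEquiv.coe_coe]
                          try simp only [← smul_tmul', smul_mul_assoc, tmul_smul, map_smul, hNassoc]
        rw [haveA1 (coactN (g m')) c a]
        have hcond1 :
            ((LinearMap.mul' k A)
              ∘ₗ lTensor A (TensorProduct.lid k A).toLinearMap
              ∘ₗ lTensor A (rTensor A (pairCD (k := k) (C := C)))
              ∘ₗ lTensor A (TensorProduct.assoc k C (Module.Dual k C) A).symm.toLinearMap
              ∘ₗ (TensorProduct.assoc k A C (Module.Dual k C ⊗[k] A)).toLinearMap
              ∘ₗ TensorProduct.map E.psi φ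
              ∘ₗ (TensorProduct.assoc k C A C).symm.toLinearMap
              ∘ₗ lTensor C E.psi)
            = ((TensorProduct.lid k A).toLinearMap
              ∘ₗ TensorProduct.map (pairCD (k := k) (C := C)) (LinearMap.mul' k A)
              ∘ₗ (TensorProduct.assoc k C (Module.Dual k C) (A ⊗[k] A)).symm.toLinearMap
              ∘ₗ lTensor C (TensorProduct.assoc k (Module.Dual k C) A A).toLinearMap
              ∘ₗ lTensor C (rTensor A φ)) := hφ.1
        rw [hcond1]
        have haveA2 : ∀ (y : N ⊗[k] C) (c : C) (a : A),
            actN (actN ((LinearMap.lTensor N (TensorProduct.lid k A).toLinearMap)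
              ((LinearMap.lTensor N (LinearMap.rTensor A pairCD))
                ((LinearMap.lTensor N (TensorProduct.assoc k C (Module.Dual k C) A).symm.toLinearMap)
                  ((TensorProduct.assoc k N C (Module.Dual k C ⊗[k] A)) (y ⊗ₜ[k] φ c))))) ⊗ₜ[k] a)
            = actN ((LinearMap.lTensor N
                ((TensorProduct.lid k A).toLinearMap
                  ∘ₗ TensorProduct.map (pairCD (k := k) (C := C)) (LinearMap.mul' k A)
                  ∘ₗ (TensorProduct.assoc k C (Module.Dual k C) (A ⊗[k] A)).symm.toLinearMap
                  ∘ₗ lTensor C (TensorProduct.assoc k (Module.Dual k C) A A).toLinearMap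
                  ∘ₗ lTensor C (rTensor A φ)))
                ((TensorProduct.assoc k N C (C ⊗[k] A)) (y ⊗ₜ[k] (c ⊗ₜ[k] a)))) := by
          intro y c a
          induction y using TensorProduct.induction_on with
          | zero => simp only [map_zero, tmul_zero, zero_tmul]
          | add x y hx hy => simp only [map_add, tmul_add, add_tmul, hx, hy]
          | tmul n c1 =>
              simp only [assoc_tmul, lTensor_tmul, rTensor_tmul, LinearMap.coe_comp,
                Function.comp_apply, LinearEquiv.coe_coe]
              generalize φ c = s
              induction s using TensorProduct.induction_on with
              | zero => simp only [map_zero, tmul_zero, zero_tmul]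
              | add x y hx hy => simp only [map_add, tmul_add, add_tmul, hx, hy]
              | tmul f b =>
                  simp only [assoc_symm_tmul, assoc_tmul, lTensor_tmul, rTensor_tmul,
                    map_tmul, lid_tmul, pairCD, lift.tmul, LinearMap.mul'_apply,
                    tmul_smul, map_smul, mul_smul_comm, hNassoc,
                    LinearMap.coe_comp, Function.comp_apply, LinearEquiv.coe_coe]
                  try simp only [← smul_tmul', smul_mul_assoc, tmul_smul, map_smul, hNassoc]
        rw [haveA2 (coactN (g m')) c a]

  · apply LinearMap.ext; intro m
    have hsplit : rTensor C (intAvg φ actN coactN coactM g)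
        = rTensor C (actN
            ∘ₗ lTensor N (TensorProduct.lid k A).toLinearMap
            ∘ₗ lTensor N (rTensor A (pairCD (k := k) (C := C)))
            ∘ₗ lTensor N (TensorProduct.assoc k C (Module.Dual k C) A).symm.toLinearMap
            ∘ₗ (TensorProduct.assoc k N C (Module.Dual k C ⊗[k] A)).toLinearMap
            ∘ₗ TensorProduct.map (coactN ∘ₗ g) φ) ∘ₗ rTensor C coactM := by
      rw [← LinearMap.rTensor_comp]; rfl
    simp only [LinearMap.coe_comp, Function.comp_apply]
    rw [hsplit]
    simp only [intAvg, LinearMap.coe_comp, Function.comp_apply]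
    have hco := LinearMap.congr_fun hM.2.1.2 m
    simp only [LinearMap.coe_comp, Function.comp_apply, LinearEquiv.coe_coe] at hco
    rw [hco]
    generalize coactM m = t
    induction t using TensorProduct.induction_on with
    | zero => simp only [map_zero, tmul_zero, zero_tmul]
    | add x y hx hy => simp only [map_add, tmul_add, add_tmul, hx, hy]
    | tmul m' c =>
        simp only [lTensor_tmul, map_tmul, LinearMap.coe_comp, Function.comp_apply,
          LinearEquiv.coe_coe]
        have claimBR : ∀ (d : C ⊗[k] C),
            (rTensor C (actN
              ∘ₗ lTensor N (TensorProduct.lid k A).toLinearMap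
              ∘ₗ lTensor N (rTensor A pairCD)
              ∘ₗ lTensor N (TensorProduct.assoc k C (Module.Dual k C) A).symm.toLinearMap
              ∘ₗ (TensorProduct.assoc k N C (Module.Dual k C ⊗[k] A)).toLinearMap
              ∘ₗ TensorProduct.map (coactN ∘ₗ g) φ))
              ((TensorProduct.assoc k M C C).symm (m' ⊗ₜ[k] d))
            = (rTensor C actN) ((TensorProduct.assoc k N A C).symm
                ((lTensor N ((TensorProduct.lid k (A ⊗[k] C)).toLinearMap
                    ∘ₗ rTensor (A ⊗[k] C) (pairCD (k := k) (C := C))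
                    ∘ₗ (TensorProduct.assoc k C (Module.Dual k C) (A ⊗[k] C)).symm.toLinearMap
                    ∘ₗ lTensor C (TensorProduct.assoc k (Module.Dual k C) A C).toLinearMap
                    ∘ₗ lTensor C (rTensor C φ)))
                  ((TensorProduct.assoc k N C (C ⊗[k] C)) (coactN (g m') ⊗ₜ[k] d)))) := by
          intro d
          induction d using TensorProduct.induction_on with
          | zero => simp only [map_zero, tmul_zero, zero_tmul]
          | add x y hx hy => simp only [map_add, tmul_add, add_tmul, hx, hy]
          | tmul c1 c2 =>
              simp only [assoc_symm_tmul, rTensor_tmul, map_tmul, LinearMap.coe_comp,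
                Function.comp_apply, LinearEquiv.coe_coe]
              generalize coactN (g m') = y
              induction y using TensorProduct.induction_on with
              | zero => simp only [map_zero, tmul_zero, zero_tmul]
              | add x y hx hy => simp only [map_add, tmul_add, add_tmul, hx, hy]
              | tmul n c' =>
                  simp only [assoc_tmul, lTensor_tmul, rTensor_tmul, map_tmul,
                    LinearMap.coe_comp, Function.comp_apply, LinearEquiv.coe_coe]
                  generalize φ c1 = u
                  induction u using TensorProduct.induction_on with
                  | zero => simp only [map_zero, tmul_zero, zero_tmul]
                  | add x y hx hy => simp only [map_add, tmul_add, add_tmul, hx, hy]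
                  | tmul f b =>
                      simp only [assoc_symm_tmul, assoc_tmul, lTensor_tmul, rTensor_tmul,
                        map_tmul, lid_tmul, pairCD, lift.tmul, tmul_smul, map_smul,
                        LinearMap.coe_comp, Function.comp_apply, LinearEquiv.coe_coe]
                      try simp only [← smul_tmul', tmul_smul, map_smul]
        have claimBL : ∀ (n' : N) (s : Module.Dual k C ⊗[k] A),
            coactN (actN ((lTensor N (TensorProduct.lid k A).toLinearMap)
              ((lTensor N (rTensor A pairCD))
                ((lTensor N (TensorProduct.assoc k C (Module.Dual k C) A).symm.toLinearMap)
                  ((TensorProduct.assoc k N C (Module.Dual k C ⊗[k] A)) (coactN n' ⊗ₜ[k] s))))))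
            = (rTensor C actN) ((TensorProduct.assoc k N A C).symm
                ((lTensor N (E.psi
                    ∘ₗ lTensor C (TensorProduct.lid k A).toLinearMap
                    ∘ₗ lTensor C (rTensor A (pairCD (k := k) (C := C)))
                    ∘ₗ lTensor C (TensorProduct.assoc k C (Module.Dual k C) A).symm.toLinearMap
                    ∘ₗ (TensorProduct.assoc k C C (Module.Dual k C ⊗[k] A)).toLinearMap))
                  ((TensorProduct.assoc k N (C ⊗[k] C) (Module.Dual k C ⊗[k] A))
                    ((lTensor N (Coalgebra.comul (R := k) (A := C))) (coactN n') ⊗ₜ[k] s)))) := by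
          intro n' s
          have hcoN := LinearMap.congr_fun hN.2.1.2 n'
          simp only [LinearMap.coe_comp, Function.comp_apply, LinearEquiv.coe_coe] at hcoN
          have hcoN' : (lTensor N (Coalgebra.comul (R := k) (A := C))) (coactN n')
              = (TensorProduct.assoc k N C C) ((rTensor C coactN) (coactN n')) := by
            rw [hcoN, LinearEquiv.apply_symm_apply]
          rw [hcoN']
          generalize coactN n' = y
          induction y using TensorProduct.induction_on with
          | zero => simp only [map_zero, tmul_zero, zero_tmul]
          | add x y hx hy => simp only [map_add, tmul_add, add_tmul, hx, hy]
          | tmul n c' =>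
              simp only [assoc_tmul, lTensor_tmul, rTensor_tmul, map_tmul,
                LinearMap.coe_comp, Function.comp_apply, LinearEquiv.coe_coe]
              induction s using TensorProduct.induction_on with
              | zero => simp only [map_zero, tmul_zero, zero_tmul]
              | add x y hx hy => simp only [map_add, tmul_add, add_tmul, hx, hy]
              | tmul f b =>
                  simp only [assoc_symm_tmul, assoc_tmul, lTensor_tmul, rTensor_tmul,
                    map_tmul, lid_tmul, pairCD, lift.tmul, tmul_smul, map_smul,
                    LinearMap.coe_comp, Function.comp_apply, LinearEquiv.coe_coe]
                  have h2 := LinearMap.congr_fun hN.2.2 (n ⊗ₜ[k] b)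
                  simp only [LinearMap.coe_comp, Function.comp_apply, rTensor_tmul,
                    LinearEquiv.coe_coe] at h2
                  rw [h2]
                  generalize coactN n = x
                  induction x using TensorProduct.induction_on with
                  | zero => simp only [map_zero, tmul_zero, zero_tmul, smul_zero]
                  | add x y hx hy =>
                      simp only [map_add, tmul_add, add_tmul, smul_add, hx, hy]
                  | tmul n0 c1 =>
                      simp only [assoc_symm_tmul, assoc_tmul, lTensor_tmul, rTensor_tmul,
                        map_tmul, lid_tmul, pairCD, lift.tmul, tmul_smul, map_smul,
                        LinearMap.coe_comp, Function.comp_apply, LinearEquiv.coe_coe]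
        rw [claimBL (g m') (φ c), claimBR (Coalgebra.comul c)]
        have glue : ∀ (y : N ⊗[k] C),
            (lTensor N (E.psi
                ∘ₗ lTensor C (TensorProduct.lid k A).toLinearMap
                ∘ₗ lTensor C (rTensor A (pairCD (k := k) (C := C)))
                ∘ₗ lTensor C (TensorProduct.assoc k C (Module.Dual k C) A).symm.toLinearMap
                ∘ₗ (TensorProduct.assoc k C C (Module.Dual k C ⊗[k] A)).toLinearMap))
              ((TensorProduct.assoc k N (C ⊗[k] C) (Module.Dual k C ⊗[k] A))
                ((lTensor N (Coalgebra.comul (R := k) (A := C))) y ⊗ₜ[k] φ c))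
            = (lTensor N ((TensorProduct.lid k (A ⊗[k] C)).toLinearMap
                ∘ₗ rTensor (A ⊗[k] C) (pairCD (k := k) (C := C))
                ∘ₗ (TensorProduct.assoc k C (Module.Dual k C) (A ⊗[k] C)).symm.toLinearMap
                ∘ₗ lTensor C (TensorProduct.assoc k (Module.Dual k C) A C).toLinearMap
                ∘ₗ lTensor C (rTensor C φ)))
              ((TensorProduct.assoc k N C (C ⊗[k] C)) (y ⊗ₜ[k] Coalgebra.comul c)) := by
          intro y
          induction y using TensorProduct.induction_on with
          | zero => simp only [map_zero, tmul_zero, zero_tmul]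
          | add x y hx hy => simp only [map_add, tmul_add, add_tmul, hx, hy]
          | tmul n c' =>
              simp only [assoc_tmul, lTensor_tmul, LinearMap.coe_comp,
                Function.comp_apply, LinearEquiv.coe_coe]
              have h := LinearMap.congr_fun hφ.2.1 (c' ⊗ₜ[k] c)
              simp only [LinearMap.coe_comp, Function.comp_apply, lTensor_tmul, map_tmul,
                LinearEquiv.coe_coe] at h
              rw [h]
        rw [glue (coactN (g m'))]

  · have hgc := hgE.2
    apply LinearMap.ext; intro m
    simp only [intAvg, LinearMap.coe_comp, Function.comp_apply]
    rw [hgc]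
    have hmap : TensorProduct.map (rTensor C g ∘ₗ coactM) φ
        = TensorProduct.map (rTensor C g) φ ∘ₗ rTensor C coactM := by
      apply TensorProduct.ext'; intro x y; simp
    rw [hmap]
    have hco := LinearMap.congr_fun hM.2.1.2 m
    simp only [LinearMap.coe_comp, Function.comp_apply, LinearEquiv.coe_coe] at hco
    simp only [LinearMap.coe_comp, Function.comp_apply]
    rw [hco]
    conv_rhs => rw [← hM.2.1.1 m]
    generalize coactM m = t
    induction t using TensorProduct.induction_on with
    | zero => simp only [map_zero, tmul_zero, zero_tmul]
    | add x y hx hy => simp only [map_add, hx, hy]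
    | tmul m' c =>
        simp only [lTensor_tmul, rid_tmul, map_smul, LinearEquiv.coe_coe]
        have h3 := LinearMap.congr_fun hφ.2.2 c
        simp only [LinearMap.coe_comp, Function.comp_apply, LinearEquiv.coe_coe,
          Algebra.linearMap_apply] at h3
        have key : ∀ d : C ⊗[k] C,
            actN ((LinearMap.lTensor N (TensorProduct.lid k A).toLinearMap)
              ((LinearMap.lTensor N (LinearMap.rTensor A pairCD))
                ((LinearMap.lTensor N (TensorProduct.assoc k C (Module.Dual k C) A).symm.toLinearMap)
                  ((TensorProduct.assoc k N C (Module.Dual k C ⊗[k] A)).toLinearMap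
                    ((TensorProduct.map (LinearMap.rTensor C g) φ)
                      ((TensorProduct.assoc k M C C).symm (m' ⊗ₜ[k] d)))))))
            = actN (g m' ⊗ₜ[k] ((TensorProduct.lid k A)
                ((LinearMap.rTensor A pairCD)
                  ((TensorProduct.assoc k C (Module.Dual k C) A).symm
                    ((LinearMap.lTensor C φ) d))))) := by
          intro d
          induction d using TensorProduct.induction_on with
          | zero => simp only [map_zero, tmul_zero, zero_tmul]
          | add x y hx hy => simp only [map_add, tmul_add, hx, hy]
          | tmul c1 c2 =>
              simp only [assoc_symm_tmul, map_tmul, lTensor_tmul, LinearEquiv.coe_coe,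
                rTensor_tmul]
              generalize φ c2 = s
              induction s using TensorProduct.induction_on with
              | zero => simp only [map_zero, tmul_zero, zero_tmul]
              | add x y hx hy => simp only [map_add, tmul_add, hx, hy]
              | tmul f a =>
                  simp only [assoc_tmul, assoc_symm_tmul, lTensor_tmul, rTensor_tmul,
                    map_tmul, LinearEquiv.coe_coe, lid_tmul, pairCD, lift.tmul]
        simp only [LinearEquiv.coe_coe] at key ⊢
        rw [key, h3, Algebra.algebraMap_eq_smul_one, tmul_smul]
        simp only [map_smul, hN.1.1]
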